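/- If A is a Krull-Schmidt additive category (every nonzero object is a finite direct sum of objects with local endomorphism rings) and I is an ideal of A, then the quotient category A/I is also Krull-Schmidt. -/

import Mathlib

open CategoryTheory CategoryTheory.Limits

universe v u

/-- A (two-sided categorical) ideal of a preadditive category: an additive subgroup of
each Hom group, closed under composition with arbitrary morphisms on both sides. -/
structure CatIdeal (C : Type u) [Category.{v} C] [Preadditive C] where
  I : ∀ X Y : C, AddSubgroup (X ⟶ Y)
  comp_left : ∀ {X Y Z : C} (f : X ⟶ Y) (g : Y ⟶ Z), f ∈ I X Y → f ≫ g ∈ I X Z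
  comp_right : ∀ {X Y Z : C} (f : X ⟶ Y) (g : Y ⟶ Z), g ∈ I Y Z → f ≫ g ∈ I X Z

attribute [local instance] CategoryTheory.Limits.hasBinaryBiproducts_of_finite_biproducts

/-- The congruence on `End X` induced by a categorical ideal; its quotient is the
endomorphism ring of `X` in the quotient category `C/I`. -/
def CatIdeal.endRingCon {C : Type u} [Category.{v} C] [Preadditive C] (J : CatIdeal C)
    (X : C) : RingCon (End X) where
  r f g := f - g ∈ J.I X X
  iseqv := by
    refine ⟨fun f => ?_, fun {a b} h => ?_, fun {a b c} h1 h2 => ?_⟩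
    · simpa using (J.I X X).zero_mem
    · have := (J.I X X).neg_mem h
      rwa [neg_sub] at this
    · have := (J.I X X).add_mem h1 h2
      rwa [sub_add_sub_cancel] at this
  mul' := by
    intro a b c d h1 h2
    show a * c - b * d ∈ J.I X X
    have h1' : a - b ∈ J.I X X := h1
    have h2' : c - d ∈ J.I X X := h2
    have key : a * c - b * d = c ≫ (a - b) + (c - d) ≫ b := by
      rw [CategoryTheory.End.mul_def, CategoryTheory.End.mul_def,
        Preadditive.comp_sub, Preadditive.sub_comp]
      abel
    rw [key]
    exact (J.I X X).add_mem (J.comp_right _ _ h1') (J.comp_left _ _ h2')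
  add' := by
    intro a b c d h1 h2
    show a + c - (b + d) ∈ J.I X X
    have := (J.I X X).add_mem (show a - b ∈ J.I X X from h1) (show c - d ∈ J.I X X from h2)
    rw [add_sub_add_comm]; exact this


lemma isLocalRing_of_surj {R Q : Type*} [Ring R] [Ring Q] [IsLocalRing R]
    (f : R →+* Q) (hf : Function.Surjective f) (h : (1:Q) ≠ 0) : IsLocalRing Q := by
  have : Nontrivial Q := ⟨1, 0, h⟩
  constructor
  intro a b hab
  obtain ⟨a', rfl⟩ := hf a
  have hb : b = f (1 - a') := by rw [map_sub, map_one]; rw [eq_sub_iff_add_eq, ← hab, add_comm]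
  subst hb
  rcases IsLocalRing.isUnit_or_isUnit_of_add_one (a := a') (b := 1 - a')
    (by rw [add_sub_cancel]) with h' | h'
  · exact Or.inl (h'.map f)
  · exact Or.inr (h'.map f)

/-- Lemma 1.3(2): if `C` is a Krull-Schmidt additive category and `I`
is an ideal of `C`, then the quotient category `C/I` is Krull-Schmidt: every object that
is nonzero in `C/I` is, in `C/I`, a finite direct sum of objects whose endomorphism rings
in `C/I` are local. -/
theorem quotient_category_krullSchmidt {C : Type u} [Category.{v} C] [Preadditive C]
    [HasFiniteBiproducts C]
    (hKS : ∀ X : C, ¬ IsZero X →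
      ∃ (n : ℕ) (Xi : Fin n → C) (_ : X ≅ ⨁ Xi), ∀ i, IsLocalRing (End (Xi i)))
    (J : CatIdeal C) (X : C) (hX : 𝟙 X ∉ J.I X X) :
    ∃ (n : ℕ) (Xi : Fin n → C) (p : X ⟶ ⨁ Xi) (q : ⨁ Xi ⟶ X),
      p ≫ q - 𝟙 X ∈ J.I X X ∧ q ≫ p - 𝟙 (⨁ Xi) ∈ J.I (⨁ Xi) (⨁ Xi) ∧
      ∀ i, IsLocalRing ((J.endRingCon (Xi i)).Quotient) := by
    classical
  have hXnz : ¬ IsZero X := fun h => hX (by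
    rw [h.eq_of_src (𝟙 X) 0]; exact (J.I X X).zero_mem)
  obtain ⟨n, Xi, e, hloc⟩ := hKS X hXnz
  set S : Finset (Fin n) := Finset.univ.filter
    (fun i => 𝟙 (Xi i) ∉ J.I (Xi i) (Xi i)) with hS
  set m := S.card with hm
  set g : Fin m → Fin n := fun k => (S.equivFin.symm k : Fin n) with hgdef
  have hg : Function.Injective g := fun a b h =>
    S.equivFin.symm.injective (Subtype.coe_injective h)
  have hgS : ∀ k, 𝟙 (Xi (g k)) ∉ J.I (Xi (g k)) (Xi (g k)) := fun k => by
    exact (Finset.mem_filter.mp (S.equivFin.symm k).2).2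
  set Xi' : Fin m → C := fun k => Xi (g k) with hXi'
  set π' : ⨁ Xi ⟶ ⨁ Xi' := biproduct.lift (fun k => biproduct.π Xi (g k)) with hπ'
  set ι' : ⨁ Xi' ⟶ ⨁ Xi := biproduct.desc (fun k => biproduct.ι Xi (g k)) with hι'
  have h2 : ι' ≫ π' = 𝟙 (⨁ Xi') := by
    apply biproduct.hom_ext; intro k
    apply biproduct.hom_ext'; intro k'
    simp only [hπ', hι', Category.assoc, biproduct.lift_π, biproduct.ι_desc_assoc,
      Category.id_comp, biproduct.ι_π]
    by_cases h : k' = k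
    · subst h; simp; rfl
    · rw [dif_neg h, dif_neg (fun hh => h (hg hh))]
  have h1 : π' ≫ ι' = ∑ i ∈ S, biproduct.π Xi i ≫ biproduct.ι Xi i := by
    rw [hπ', hι', biproduct.lift_desc, ← Finset.sum_coe_sort S
      (fun i => biproduct.π Xi i ≫ biproduct.ι Xi i)]
    exact Equiv.sum_comp S.equivFin.symm
      (fun x : S => biproduct.π Xi (x : Fin n) ≫ biproduct.ι Xi (x : Fin n))
  have key : π' ≫ ι' - 𝟙 (⨁ Xi) ∈ J.I (⨁ Xi) (⨁ Xi) := by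
    rw [h1, ← biproduct.total, hS,
      ← Finset.sum_filter_add_sum_filter_not Finset.univ
        (fun i => 𝟙 (Xi i) ∉ J.I (Xi i) (Xi i))
        (fun i => biproduct.π Xi i ≫ biproduct.ι Xi i)]
    rw [sub_add_eq_sub_sub, sub_self, zero_sub]
    refine (J.I _ _).neg_mem (AddSubgroup.sum_mem _ (fun i hi => ?_))
    rw [Finset.mem_filter] at hi
    have hmem : 𝟙 (Xi i) ∈ J.I (Xi i) (Xi i) := not_not.mp hi.2
    have : biproduct.π Xi i ≫ biproduct.ι Xi i
        = biproduct.π Xi i ≫ (𝟙 (Xi i) ≫ biproduct.ι Xi i) := by simp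
    rw [this]
    exact J.comp_right _ _ (J.comp_left _ _ hmem)
  refine ⟨m, Xi', e.hom ≫ π', ι' ≫ e.inv, ?_, ?_, ?_⟩
  · have : (e.hom ≫ π') ≫ ι' ≫ e.inv - 𝟙 X
        = e.hom ≫ ((π' ≫ ι' - 𝟙 (⨁ Xi)) ≫ e.inv) := by
      simp [Preadditive.comp_sub, Preadditive.sub_comp]
    rw [this]
    exact J.comp_right _ _ (J.comp_left _ _ key)
  · have : (ι' ≫ e.inv) ≫ e.hom ≫ π' - 𝟙 (⨁ Xi') = 0 := by
      rw [Category.assoc, Iso.inv_hom_id_assoc, h2, sub_self]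
    rw [this]
    exact (J.I _ _).zero_mem
  · intro k
    have : IsLocalRing (End (Xi' k)) := hloc (g k)
    refine isLocalRing_of_surj (J.endRingCon (Xi' k)).mk'
      (fun x => Quot.exists_rep x) (fun h => hgS k ?_)
    have hc : (J.endRingCon (Xi' k)) 1 0 := (J.endRingCon (Xi' k)).eq.mp h
    have : (1 : End (Xi' k)) - 0 ∈ J.I (Xi' k) (Xi' k) := hc
    rwa [sub_zero] at this
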